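/- If G is a connected graph with no induced K_{1,3} and no induced hammer that contains an induced cycle of length at least 6 but is not itself a cycle, then G contains an induced C_6. -/

import Mathlib

open SimpleGraph

/-- The hammer: a triangle `0,1,2` with a pendant path `0 - 3 - 4`. -/
def hammer : SimpleGraph (Fin 5) :=
  SimpleGraph.fromEdgeSet {s(0, 1), s(0, 2), s(1, 2), s(0, 3), s(3, 4)}

lemma claw_of {V : Type*} {G : SimpleGraph V} (c a b d : V)
    (hca : G.Adj c a) (hcb : G.Adj c b) (hcd : G.Adj c d)
    (hab : ¬G.Adj a b) (had : ¬G.Adj a d) (hbd : ¬G.Adj b d)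
    (nab : a ≠ b) (nad : a ≠ d) (nbd : b ≠ d) :
    Nonempty (completeBipartiteGraph (Fin 1) (Fin 3) ↪g G) := by
  have hac := hca.symm; have hbc := hcb.symm; have hdc := hcd.symm
  have hba : ¬G.Adj b a := fun h => hab h.symm
  have hda : ¬G.Adj d a := fun h => had h.symm
  have hdb : ¬G.Adj d b := fun h => hbd h.symm
  have nca := hca.ne; have ncb := hcb.ne; have ncd := hcd.ne
  have nac := hca.ne'; have nbc := hcb.ne'; have ndc := hcd.ne'
  have nba := nab.symm; have nda := nad.symm; have ndb := nbd.symm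
  refine ⟨⟨⟨Sum.elim (fun _ => c) ![a, b, d], ?_⟩, ?_⟩⟩
  · rintro (x | x) (y | y) h <;>
      simp only [Sum.elim_inl, Sum.elim_inr] at h
    · exact congrArg Sum.inl (Subsingleton.elim x y)
    · exfalso; fin_cases y <;> simp_all
    · exfalso; fin_cases x <;> simp_all
    · congr 1; fin_cases x <;> fin_cases y <;> simp_all
  · rintro (x | x) (y | y) <;>
      [skip; fin_cases y; fin_cases x; (fin_cases x <;> fin_cases y)] <;>
      simp_all [DFunLike.coe, completeBipartiteGraph]

lemma hammer_of {V : Type*} {G : SimpleGraph V} (p0 p1 p2 p3 p4 : V)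
    (e01 : G.Adj p0 p1) (e02 : G.Adj p0 p2) (e12 : G.Adj p1 p2) (e03 : G.Adj p0 p3)
    (e34 : G.Adj p3 p4)
    (n13 : ¬G.Adj p1 p3) (n23 : ¬G.Adj p2 p3) (n14 : ¬G.Adj p1 p4) (n24 : ¬G.Adj p2 p4)
    (n04 : ¬G.Adj p0 p4)
    (d04 : p0 ≠ p4) (d13 : p1 ≠ p3) (d23 : p2 ≠ p3) (d14 : p1 ≠ p4) (d24 : p2 ≠ p4) :
    Nonempty (hammer ↪g G) := by
  have e10 := e01.symm; have e20 := e02.symm; have e21 := e12.symm; have e30 := e03.symm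
  have e43 := e34.symm
  have n31 : ¬G.Adj p3 p1 := fun h => n13 h.symm
  have n32 : ¬G.Adj p3 p2 := fun h => n23 h.symm
  have n41 : ¬G.Adj p4 p1 := fun h => n14 h.symm
  have n42 : ¬G.Adj p4 p2 := fun h => n24 h.symm
  have n40 : ¬G.Adj p4 p0 := fun h => n04 h.symm
  have d01 := e01.ne; have d02 := e02.ne; have d12 := e12.ne; have d03 := e03.ne
  have d34 := e34.ne
  have d10 := d01.symm; have d20 := d02.symm; have d21 := d12.symm; have d30 := d03.symm
  have d43 := d34.symm; have d40 := d04.symm; have d31 := d13.symm; have d32 := d23.symm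
  have d41 := d14.symm; have d42 := d24.symm
  refine ⟨⟨⟨![p0, p1, p2, p3, p4], ?_⟩, ?_⟩⟩
  · intro x y h
    fin_cases x <;> fin_cases y <;> simp_all
  · intro x y
    fin_cases x <;> fin_cases y <;>
      simp_all [DFunLike.coe, hammer, SimpleGraph.fromEdgeSet_adj, Sym2.eq_iff]

lemma core_chase {V : Type*} {G : SimpleGraph V}
    (hclaw : ¬ Nonempty (completeBipartiteGraph (Fin 1) (Fin 3) ↪g G))
    (hham : ¬ Nonempty (hammer ↪g G))
    {n : ℕ} (hn : 7 ≤ n) (v : ℕ → V)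
    (hinj : ∀ a b : ℕ, v a = v b → a % n = b % n)
    (hper : ∀ a : ℕ, v (a + n) = v a)
    (hadj : ∀ a : ℕ, G.Adj (v a) (v (a + 1)))
    (hnon : ∀ a b : ℕ, a % n ≠ b % n → (a + 1) % n ≠ b % n → (b + 1) % n ≠ a % n →
      ¬ G.Adj (v a) (v b))
    (u : V) (hu : ∀ a, u ≠ v a)
    (i : ℕ) (h0 : G.Adj u (v i)) : False := by
  have hmod : ∀ a b : ℕ, a < b → b - a < n → a % n ≠ b % n := by
    intro a b hab hlt h
    have hdvd : n ∣ b - a := (Nat.modEq_iff_dvd' hab.le).mp h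
    have := Nat.le_of_dvd (by omega) hdvd
    omega
  have hvne : ∀ a b : ℕ, a % n ≠ b % n → v a ≠ v b := fun a b h hv => h (hinj a b hv)
  -- nonadjacency at distance k, 2 ≤ k ≤ n - 2
  have hnone : ∀ a k : ℕ, 2 ≤ k → k + 1 < n → ¬ G.Adj (v a) (v (a + k)) := by
    intro a k hk1 hk2
    exact hnon a (a + k) (hmod a (a + k) (by omega) (by omega))
      (hmod (a + 1) (a + k) (by omega) (by omega))
      (Ne.symm (hmod a (a + k + 1) (by omega) (by omega)))
  have hvne' : ∀ a k : ℕ, 1 ≤ k → k < n → v a ≠ v (a + k) :=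
    fun a k h1 h2 => hvne a (a + k) (hmod a (a + k) (by omega) (by omega))
  set N : ℕ → Prop := fun a => G.Adj u (v a) with hN
  have Ncast : ∀ a b : ℕ, a = b → N a → N b := fun a b h => h ▸ id
  -- claw with center u
  have C : ∀ a k l : ℕ, 2 ≤ k → 2 ≤ l → k + l + 1 < n →
      N a → N (a + k) → N (a + k + l) → False := by
    intro a k l hk hl hkl ha hb hc
    refine hclaw (claw_of u (v a) (v (a + k)) (v (a + k + l)) ha hb hc ?_ ?_ ?_ ?_ ?_ ?_)
    · exact hnone a k hk (by omega)
    · have := hnone a (k + l) (by omega) (by omega)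
      rwa [show a + (k + l) = a + k + l by omega] at this
    · exact hnone (a + k) l hl (by omega)
    · exact hvne' a k (by omega) (by omega)
    · have := hvne' a (k + l) (by omega) (by omega)
      rwa [show a + (k + l) = a + k + l by omega] at this
    · exact hvne' (a + k) l (by omega) (by omega)
  -- hammer fact: two consecutive neighbours extend
  have B : ∀ a : ℕ, N a → N (a + 1) → N (a + 2) ∨ N (a + 3) := by
    intro a ha ha1
    by_contra h
    push_neg at h
    obtain ⟨h2, h3⟩ := h
    refine hham (hammer_of (v (a+1)) (v a) u (v (a+2)) (v (a+3))
      (hadj a).symm ha1.symm ha.symm ?_ ?_ ?_ h2 ?_ h3 ?_ ?_ ?_ (hu _) ?_ (hu _))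
    · have := hadj (a+1); rwa [show a+1+1 = a+2 by omega] at this
    · have := hadj (a+2); rwa [show a+2+1 = a+3 by omega] at this
    · exact hnone a 2 le_rfl (by omega)
    · exact hnone a 3 (by omega) (by omega)
    · have := hnone (a+1) 2 le_rfl (by omega)
      rwa [show a+1+2 = a+3 by omega] at this
    · have := hvne' (a+1) 2 (by omega) (by omega)
      rwa [show a+1+2 = a+3 by omega] at this
    · exact hvne' a 2 (by omega) (by omega)
    · exact hvne' a 3 (by omega) (by omega)
  -- claw fact at a cycle vertex
  have A : ∀ a : ℕ, N a → N (a + 1) ∨ N (a + (n - 1)) := by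
    intro a ha
    by_contra h
    push_neg at h
    obtain ⟨h1, h2⟩ := h
    refine hclaw (claw_of (v a) u (v (a+1)) (v (a + (n-1)))
      ha.symm (hadj a) ?_ h1 h2 ?_ (hu _) (hu _) ?_)
    · have := hadj (a + (n-1))
      rw [show a + (n-1) + 1 = a + n by omega, hper] at this
      exact this.symm
    · have := hnone (a+1) (n-2) (by omega) (by omega)
      rwa [show a+1+(n-2) = a + (n-1) by omega] at this
    · have := hvne' (a+1) (n-2) (by omega) (by omega)
      rwa [show a+1+(n-2) = a + (n-1) by omega] at this
  -- the chase
  have chase : ∀ j : ℕ, N j → N (j + 1) → False := by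
    intro j h0 h1
    by_cases hc : N (j + 2)
    · have h4 : ¬N (j + 4) := fun h =>
        C j 2 2 (by omega) (by omega) (by omega) h0 hc (Ncast _ _ (by omega) h)
      have h3 : N (j + 3) := by
        rcases B (j+1) h1 (Ncast _ _ (by omega) hc) with h | h
        · exact Ncast _ _ (by omega) h
        · exact absurd (Ncast _ _ (by omega) h) h4
      have h5 : ¬N (j + 5) := fun h =>
        C (j+1) 2 2 (by omega) (by omega) (by omega) h1 (Ncast _ _ (by omega) h3)
          (Ncast _ _ (by omega) h)
      rcases B (j+2) hc (Ncast _ _ (by omega) h3) with h | h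
      · exact h4 (Ncast _ _ (by omega) h)
      · exact h5 (Ncast _ _ (by omega) h)
    · have h3 : N (j + 3) := by
        rcases B j h0 h1 with h | h
        · exact absurd h hc
        · exact h
      have h4 : N (j + 4) := by
        rcases A (j+3) h3 with h | h
        · exact Ncast _ _ (by omega) h
        · refine absurd ?_ hc
          show G.Adj u (v (j + 2))
          have hv : v (j + 3 + (n-1)) = v (j + 2) := by
            rw [show j + 3 + (n-1) = (j+2) + n by omega, hper]
          rw [← hv]
          exact h
      rcases B (j+3) h3 (Ncast _ _ (by omega) h4) with h | h
      · exact C (j+1) 2 2 (by omega) (by omega) (by omega) h1 (Ncast _ _ (by omega) h3)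
          (Ncast _ _ (by omega) h)
      · exact C (j+1) 2 3 (by omega) (by omega) (by omega) h1 (Ncast _ _ (by omega) h3)
          (Ncast _ _ (by omega) h)
  rcases A i h0 with h1 | h1
  · exact chase i h0 h1
  · refine chase (i + (n-1)) h1 ?_
    show G.Adj u (v (i + (n-1) + 1))
    rw [show i + (n-1) + 1 = i + n by omega, hper]
    exact h0

/-- A connected `{K_{1,3}, hammer}`-free graph containing an induced cycle of
length at least 6 that is not itself a cycle contains an induced `C₆`. -/
theorem claw_hammer_free_contains_C6 {V : Type*} (G : SimpleGraph V) (hconn : G.Connected)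
    (hclaw : ¬ Nonempty (completeBipartiteGraph (Fin 1) (Fin 3) ↪g G))
    (hham : ¬ Nonempty (hammer ↪g G))
    (hcyc : ∃ n : ℕ, 6 ≤ n ∧ Nonempty (cycleGraph n ↪g G))
    (hnotcyc : ¬ ∃ m : ℕ, 3 ≤ m ∧ Nonempty (G ≃g cycleGraph m)) :
    Nonempty (cycleGraph 6 ↪g G) := by
  obtain ⟨n, hn6, ⟨e⟩⟩ := hcyc
  rcases eq_or_lt_of_le hn6 with h6 | h7
  · subst h6; exact ⟨e⟩
  · exfalso
    have hn : 7 ≤ n := h7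
    haveI : NeZero n := ⟨by omega⟩
    by_cases hS : ∀ w : V, ∃ x, e x = w
    · exact hnotcyc ⟨n, by omega,
        ⟨(SimpleGraph.Iso.symm ⟨Equiv.ofBijective e ⟨e.injective, fun w => hS w⟩,
          e.map_adj_iff⟩)⟩⟩
    · push_neg at hS
      obtain ⟨u0, hu0⟩ := hS
      have hval1 : (1 : Fin n).val = 1 := by
        rw [Fin.val_one']; exact Nat.mod_eq_of_lt (by omega)
      set v : ℕ → V := fun a => e ⟨a % n, Nat.mod_lt _ (by omega)⟩ with hv
      have hinj : ∀ a b : ℕ, v a = v b → a % n = b % n := by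
        intro a b h
        simpa using congrArg Fin.val (e.injective h)
      have hper : ∀ a : ℕ, v (a + n) = v a := by
        intro a; simp only [hv, Nat.add_mod_right]
      have hstep : ∀ a : ℕ,
          (⟨(a + 1) % n, Nat.mod_lt _ (by omega)⟩ : Fin n) =
            ⟨a % n, Nat.mod_lt _ (by omega)⟩ + 1 := by
        intro a
        apply Fin.ext
        rw [Fin.val_add, hval1, Nat.mod_add_mod]
      have hadj : ∀ a : ℕ, G.Adj (v a) (v (a + 1)) := by
        intro a
        show G.Adj (e _) (e _)
        rw [e.map_adj_iff, cycleGraph_adj']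
        right
        rw [hstep a, add_sub_cancel_left, hval1]
      have adjchar : ∀ a b : ℕ, G.Adj (v a) (v b) →
          (a + 1) % n = b % n ∨ (b + 1) % n = a % n := by
        intro a b h
        rw [hv] at h
        simp only at h
        rw [e.map_adj_iff, cycleGraph_adj'] at h
        rcases h with h | h
        · right
          have hsub : (⟨a % n, Nat.mod_lt _ (by omega)⟩ : Fin n) -
              ⟨b % n, Nat.mod_lt _ (by omega)⟩ = 1 :=
            Fin.ext (by rw [hval1]; exact h)
          have h' := sub_eq_iff_eq_add.mp hsub
          have hc := congrArg Fin.val h'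
          rw [Fin.val_add, hval1] at hc
          simp only at hc
          rw [Nat.add_comm 1 (b % n), Nat.mod_add_mod] at hc
          exact hc.symm
        · left
          have hsub : (⟨b % n, Nat.mod_lt _ (by omega)⟩ : Fin n) -
              ⟨a % n, Nat.mod_lt _ (by omega)⟩ = 1 :=
            Fin.ext (by rw [hval1]; exact h)
          have h' := sub_eq_iff_eq_add.mp hsub
          have hc := congrArg Fin.val h'
          rw [Fin.val_add, hval1] at hc
          simp only at hc
          rw [Nat.add_comm 1 (a % n), Nat.mod_add_mod] at hc
          exact hc.symm
      have hnon : ∀ a b : ℕ, a % n ≠ b % n → (a + 1) % n ≠ b % n → (b + 1) % n ≠ a % n →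
          ¬ G.Adj (v a) (v b) := by
        intro a b _ h2 h3 h
        rcases adjchar a b h with h' | h'
        · exact h2 h'
        · exact h3 h'
      obtain ⟨p⟩ := hconn.preconnected u0 (e ⟨0, by omega⟩)
      obtain ⟨d, _, hd1, hd2⟩ := p.exists_boundary_dart {w | ∀ x, e x ≠ w} hu0
        (fun h => h ⟨0, by omega⟩ rfl)
      have hd2' : ∃ x, e x = d.snd := by
        by_contra h; push_neg at h; exact hd2 h
      obtain ⟨x, hx⟩ := hd2'
      have hu : ∀ a : ℕ, d.fst ≠ v a := fun a h => hd1 _ h.symm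
      have hvx : v x.val = e x := by
        simp only [hv]
        congr 1
        exact Fin.ext (Nat.mod_eq_of_lt x.isLt)
      have h0 : G.Adj d.fst (v x.val) := by
        rw [hvx, hx]; exact d.adj
      exact core_chase hclaw hham hn v hinj hper hadj hnon d.fst hu x.val h0
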